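/- Let p ≥ 5 be an integer and let r : ℤ → ℝ² be a nondegenerate discrete planar curve, closed with period p, with constant curvatures κ_n = 1 and κ̄_n = 2·cos(2π/p) for all n (an affinely regular convex p-gon). Define the pentagram map image T(r)(k) = r(k) + (1/(1 + κ_k + κ̄_k)) · (r(k+2) − r(k)). Then T(r) is again a nondegenerate discrete planar curve closed with period p, with the same constant curvatures κ'_n = 1 and κ̄'_n = 2·cos(2π/p); that is, affinely regular polygons are stable under the pentagram map. -/

import Mathlib

/-- Planar determinant of two vectors in ℝ². -/
def det2 (u v : Fin 2 → ℝ) : ℝ := u 0 * v 1 - u 1 * v 0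

/-- Edge tangent vector of a discrete planar curve. -/
def tang2 (r : ℤ → Fin 2 → ℝ) (k : ℤ) : Fin 2 → ℝ := r (k + 1) - r k

/-- Nondegeneracy of a discrete planar curve. -/
def Nondeg2 (r : ℤ → Fin 2 → ℝ) : Prop :=
  ∀ k : ℤ, det2 (tang2 r (k - 1)) (tang2 r k) ≠ 0

/-- First centroaffine curvature. -/
noncomputable def kappa2 (r : ℤ → Fin 2 → ℝ) (k : ℤ) : ℝ :=
  det2 (tang2 r k) (tang2 r (k + 1)) / det2 (tang2 r (k - 1)) (tang2 r k)

/-- Second centroaffine curvature. -/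
noncomputable def kbar2 (r : ℤ → Fin 2 → ℝ) (k : ℤ) : ℝ :=
  det2 (tang2 r (k - 1)) (tang2 r (k + 1)) / det2 (tang2 r (k - 1)) (tang2 r k)

/-- The pentagram map, expressed in centroaffine invariants. -/
noncomputable def pentagram (r : ℤ → Fin 2 → ℝ) (k : ℤ) : Fin 2 → ℝ :=
  r k + (1 / (1 + kappa2 r k + kbar2 r k)) • (r (k + 2) - r k)

lemma det2_selfzero (a : Fin 2 → ℝ) : det2 a a = 0 := by
  simp only [det2]; ring

lemma det2_expand (α β γ δ : ℝ) (a b u v : Fin 2 → ℝ) :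
    det2 (α • a + β • b) (γ • u + δ • v) =
      α * γ * det2 a u + α * δ * det2 a v + β * γ * det2 b u + β * δ * det2 b v := by
  simp only [det2, Pi.add_apply, Pi.smul_apply, smul_eq_mul]; ring

lemma det2_smul_sub_right (x : ℝ) (a u v : Fin 2 → ℝ) :
    det2 a (x • u - v) = x * det2 a u - det2 a v := by
  simp only [det2, Pi.sub_apply, Pi.smul_apply, smul_eq_mul]; ring

lemma span_rec (a b v : Fin 2 → ℝ) (c : ℝ)
    (hD : det2 a b ≠ 0)
    (h1 : det2 b v = det2 a b)
    (h2 : det2 a v = c * det2 a b) :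
    v = c • b - a := by
  have hD' : a 0 * b 1 - a 1 * b 0 ≠ 0 := hD
  simp only [det2] at h1 h2
  have h0 : v 0 = c * b 0 - a 0 := by
    apply mul_right_cancel₀ hD'
    linear_combination (b 0) * h2 - (a 0) * h1
  have h1' : v 1 = c * b 1 - a 1 := by
    apply mul_right_cancel₀ hD'
    linear_combination (b 1) * h2 - (a 1) * h1
  funext i
  fin_cases i
  · exact h0
  · exact h1'

open Real in
/-- Affinely regular convex polygons are stable under the pentagram map. -/
theorem stmt_17 (p : ℕ) (hp : 5 ≤ p) (r : ℤ → Fin 2 → ℝ) (hr : Nondeg2 r)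
    (hclosed : ∀ k : ℤ, r (k + p) = r k)
    (hκ : ∀ n : ℤ, kappa2 r n = 1)
    (hκbar : ∀ n : ℤ, kbar2 r n = 2 * Real.cos (2 * π / p)) :
    Nondeg2 (pentagram r) ∧
      (∀ k : ℤ, pentagram r (k + p) = pentagram r k) ∧
      (∀ n : ℤ, kappa2 (pentagram r) n = 1) ∧
      (∀ n : ℤ, kbar2 (pentagram r) n = 2 * Real.cos (2 * π / p)) := by
  have hp5 : (5:ℝ) ≤ (p:ℝ) := by exact_mod_cast hp
  have hπ := Real.pi_pos
  have hppos : (0:ℝ) < (p:ℝ) := by linarith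
  have hcos : 0 < Real.cos (2 * Real.pi / p) := by
    apply Real.cos_pos_of_mem_Ioo
    constructor
    · have h : 0 < 2 * Real.pi / (p:ℝ) := by positivity
      linarith
    · rw [div_lt_iff₀ hppos]
      nlinarith
  set c : ℝ := 2 * Real.cos (2 * Real.pi / p) with hc
  have hc0 : 0 < c := by positivity
  have h2c : (2:ℝ) + c ≠ 0 := by positivity
  have hμ : c / (2 + c) ≠ 0 := div_ne_zero (ne_of_gt hc0) h2c
  -- the two curvature relations in determinant form
  have e1 : ∀ k : ℤ, det2 (tang2 r k) (tang2 r (k+1)) = det2 (tang2 r (k-1)) (tang2 r k) := by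
    intro k
    have h := hκ k
    rw [kappa2, div_eq_one_iff_eq (hr k)] at h
    exact h
  have e2 : ∀ k : ℤ, det2 (tang2 r (k-1)) (tang2 r (k+1)) = c * det2 (tang2 r (k-1)) (tang2 r k) := by
    intro k
    have h := hκbar k
    rw [kbar2, div_eq_iff (hr k)] at h
    exact h
  -- the three-term recurrence for tangents
  have hrecur : ∀ k : ℤ, tang2 r (k+1) = c • tang2 r k - tang2 r (k-1) := by
    intro k
    exact span_rec _ _ _ _ (hr k) (e1 k) (e2 k)
  have e1' : ∀ k : ℤ, det2 (tang2 r (k+1)) (tang2 r (k+2)) = det2 (tang2 r k) (tang2 r (k+1)) := by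
    intro k
    have h := e1 (k+1)
    rw [show k+1-1 = k from by ring, show k+1+1 = k+2 from by ring] at h
    exact h
  have e2' : ∀ k : ℤ, det2 (tang2 r k) (tang2 r (k+2)) = c * det2 (tang2 r k) (tang2 r (k+1)) := by
    intro k
    have h := e2 (k+1)
    rw [show k+1-1 = k from by ring, show k+1+1 = k+2 from by ring] at h
    exact h
  -- the pentagram map in explicit form
  have pdef : ∀ k : ℤ, pentagram r k = r k + (1/(2+c)) • (r (k+2) - r k) := by
    intro k
    rw [pentagram, hκ k, hκbar k, show (1:ℝ) + 1 + 2 * Real.cos (2 * Real.pi / p) = 2 + c from by rw [hc]; ring]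
  -- tangents of the pentagram image
  have sdefv : ∀ k : ℤ, tang2 (pentagram r) k
      = (c/(2+c)) • tang2 r k + (c/(2+c)) • tang2 r (k+1) := by
    intro k
    have hrec := hrecur (k+1)
    rw [show k+1+1 = k+2 from by ring, show k+1-1 = k from by ring] at hrec
    funext i
    have hreci : tang2 r (k+2) i = c * tang2 r (k+1) i - tang2 r k i := by
      rw [hrec]; simp [Pi.sub_apply, Pi.smul_apply, smul_eq_mul]
    simp only [tang2, Pi.sub_apply] at hreci
    rw [show k+2+1 = k+3 from by ring] at hreci
    simp only [tang2, pdef, Pi.add_apply, Pi.sub_apply, Pi.smul_apply, smul_eq_mul]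
    rw [show k+1+2 = k+3 from by ring]
    field_simp
    linear_combination hreci
  have detA : ∀ k : ℤ, det2 (tang2 (pentagram r) k) (tang2 (pentagram r) (k+1))
      = ((c/(2+c))^2 * (2+c)) * det2 (tang2 r k) (tang2 r (k+1)) := by
    intro k
    rw [sdefv k, sdefv (k+1), show k+1+1 = k+2 from by ring, det2_expand,
      e1' k, e2' k, det2_selfzero]
    ring
  have detB : ∀ k : ℤ, det2 (tang2 (pentagram r) k) (tang2 (pentagram r) (k+2))
      = c * (((c/(2+c))^2 * (2+c)) * det2 (tang2 r k) (tang2 r (k+1))) := by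
    intro k
    have hrec := hrecur (k+2)
    rw [show k+2+1 = k+3 from by ring, show k+2-1 = k+1 from by ring] at hrec
    rw [sdefv k, sdefv (k+2), show k+2+1 = k+3 from by ring, det2_expand,
      hrec, det2_smul_sub_right, det2_smul_sub_right,
      e1' k, e2' k, det2_selfzero]
    ring
  have hX : ((c/(2+c))^2 * (2+c)) ≠ 0 := mul_ne_zero (pow_ne_zero 2 hμ) h2c
  have detA' : ∀ k : ℤ, det2 (tang2 (pentagram r) (k-1)) (tang2 (pentagram r) k)
      = ((c/(2+c))^2 * (2+c)) * det2 (tang2 r (k-1)) (tang2 r k) := by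
    intro k
    have h := detA (k-1)
    rw [show k-1+1 = k from by ring] at h
    exact h
  have hnd : Nondeg2 (pentagram r) := by
    intro k
    rw [detA' k]
    exact mul_ne_zero hX (hr k)
  refine ⟨hnd, ?_, ?_, ?_⟩
  · -- closure
    intro k
    rw [pentagram, pentagram, hκ (k + p), hκbar (k + p), hκ k, hκbar k,
      hclosed k, show k + (p:ℤ) + 2 = (k + 2) + (p:ℤ) from by ring, hclosed (k+2)]
  · -- first curvature
    intro n
    rw [kappa2, detA n, detA' n, e1 n]
    exact div_self (mul_ne_zero hX (hr n))
  · -- second curvature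
    intro n
    have hB := detB (n-1)
    rw [show n-1+2 = n+1 from by ring, show n-1+1 = n from by ring] at hB
    rw [kbar2, hB, detA' n, mul_div_assoc, div_self (mul_ne_zero hX (hr n)), mul_one, hc]
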